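/- Let d ≥ 1, let k ∈ ℝ^d with k ≠ 0, and let f : ℝ^d → ℝ be continuous with compact support. For ε > 0 set A(ε) := ∫_{ℝ^d} ε·f(y) / ((‖y+k‖² − ‖k‖²)² + ε²) dy, and for 0 < δ < ‖k‖ set B(δ) := (2δ)^{−1} ∫_{{y ∈ ℝ^d : ‖k‖ − δ ≤ ‖y+k‖ ≤ ‖k‖ + δ}} f(y) dy. Then there exists a real number L such that B(δ) → L as δ → 0⁺ and A(ε) → (π/(2‖k‖))·L as ε → 0⁺. -/

import Mathlib

open MeasureTheory Filter Topology Real Set Metric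

lemma poisson_limit (ψ : ℝ → ℝ) (hm : Measurable ψ) (C : ℝ)
    (hb : ∀ u, |ψ u| ≤ C) (hc : ContinuousAt ψ 0) :
    Tendsto (fun ε : ℝ => ∫ u : ℝ, ε * ψ u / (u ^ 2 + ε ^ 2)) (𝓝[>] 0)
      (𝓝 (π * ψ 0)) := by
  have key : ∀ ε : ℝ, 0 < ε →
      ∫ u : ℝ, ε * ψ u / (u ^ 2 + ε ^ 2) = ∫ x : ℝ, ψ (ε * x) * (1 + x ^ 2)⁻¹ := by
    intro ε hε
    have h1 := Measure.integral_comp_mul_left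
      (fun u => ε * ψ u / (u ^ 2 + ε ^ 2)) ε
    have h2 : ∫ u : ℝ, ε * ψ u / (u ^ 2 + ε ^ 2)
        = ε * ∫ x : ℝ, ε * ψ (ε * x) / ((ε * x) ^ 2 + ε ^ 2) := by
      rw [h1, abs_of_pos (inv_pos.2 hε), smul_eq_mul]
      field_simp
    rw [h2, ← integral_const_mul]
    congr 1
    funext x
    have hden : (ε * x) ^ 2 + ε ^ 2 = ε ^ 2 * (1 + x ^ 2) := by ring
    have h1x : (0:ℝ) < 1 + x ^ 2 := by positivity
    rw [hden]
    field_simp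
  have main : Tendsto (fun ε : ℝ => ∫ x : ℝ, ψ (ε * x) * (1 + x ^ 2)⁻¹) (𝓝[>] 0)
      (𝓝 (π * ψ 0)) := by
    have hlim : ∫ x : ℝ, ψ 0 * (1 + x ^ 2)⁻¹ = π * ψ 0 := by
      rw [integral_const_mul, integral_univ_inv_one_add_sq]; ring
    rw [← hlim]
    refine tendsto_integral_filter_of_dominated_convergence (fun x => C * (1 + x ^ 2)⁻¹)
      (Eventually.of_forall fun ε => ?_) (Eventually.of_forall fun ε => ?_)
      (integrable_inv_one_add_sq.const_mul C) (Eventually.of_forall fun x => ?_)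
    · exact ((hm.comp (measurable_id.const_mul ε)).mul
        (measurable_const.add (measurable_id.pow_const 2)).inv).aestronglyMeasurable
    · refine Eventually.of_forall fun x => ?_
      have h1x : (0:ℝ) < 1 + x ^ 2 := by positivity
      rw [Real.norm_eq_abs, abs_mul, abs_of_pos (inv_pos.2 h1x)]
      exact mul_le_mul_of_nonneg_right (hb _) (inv_pos.2 h1x).le
    · have hx : Tendsto (fun ε : ℝ => ε * x) (𝓝[>] 0) (𝓝 0) := by
        have := ((continuous_id.mul (continuous_const (y := x))).tendsto 0).mono_left
          (nhdsWithin_le_nhds (s := Set.Ioi (0:ℝ)))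
        simpa [Pi.mul_def] using this
      exact (hc.tendsto.comp hx).mul_const _
  refine main.congr' ?_
  filter_upwards [self_mem_nhdsWithin] with ε hε
  exact (key ε hε).symm

lemma polar_integral {E : Type*} [NormedAddCommGroup E] [NormedSpace ℝ E]
    [MeasurableSpace E] [BorelSpace E] [FiniteDimensional ℝ E] [Nontrivial E]
    (μ : Measure E) [μ.IsAddHaarMeasure] (G : E → ℝ) (hG : Integrable G μ) :
    ∫ z, G z ∂μ = ∫ r in Set.Ioi (0:ℝ),
      r ^ (Module.finrank ℝ E - 1) * ∫ ω : sphere (0:E) 1, G (r • (ω:E)) ∂μ.toSphere := by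
  set n := Module.finrank ℝ E - 1 with hn
  have hsymm : ∀ x : ({(0:E)}ᶜ : Set E), (((homeomorphUnitSphereProd E) x).2 : ℝ) • (((homeomorphUnitSphereProd E) x).1 : E) = (x : E) := by
    intro x
    have : (((homeomorphUnitSphereProd E).symm ((homeomorphUnitSphereProd E) x) : ({(0:E)}ᶜ : Set E)) : E) = (((homeomorphUnitSphereProd E) x).2 : ℝ) • (((homeomorphUnitSphereProd E) x).1 : E) :=
      homeomorphUnitSphereProd_symm_apply_coe E ((homeomorphUnitSphereProd E) x)
    rw [← this, (homeomorphUnitSphereProd E).symm_apply_apply]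
  have h0 : ∫ x : ({(0:E)}ᶜ : Set E), G ↑x ∂(μ.comap Subtype.val) = ∫ z, G z ∂μ := by
    rw [integral_subtype_comap (measurableSet_singleton (0:E)).compl fun z => G z,
      MeasureTheory.restrict_compl_singleton _]
  have hmp := μ.measurePreserving_homeomorphUnitSphereProd
  have hint : Integrable (fun p : sphere (0:E) 1 × Set.Ioi (0:ℝ) => G ((p.2 : ℝ) • (p.1 : E)))
      (μ.toSphere.prod (Measure.volumeIoiPow n)) := by
    rw [← hmp.integrable_comp_emb (homeomorphUnitSphereProd E).measurableEmbedding]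
    have : ((fun p : sphere (0:E) 1 × Set.Ioi (0:ℝ) => G ((p.2 : ℝ) • (p.1 : E))) ∘ (homeomorphUnitSphereProd E))
        = fun x : ({(0:E)}ᶜ : Set E) => G ↑x := by
      funext x; simp only [Function.comp_apply, hsymm]
    rw [this]
    exact ((MeasurableEmbedding.subtype_coe
        (measurableSet_singleton (0:E)).compl).integrable_map_iff).1
      (by rw [map_comap_subtype_coe (measurableSet_singleton (0:E)).compl]
          exact hG.integrableOn)
  have h1 : ∫ x : ({(0:E)}ᶜ : Set E), G ↑x ∂(μ.comap Subtype.val)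
      = ∫ p : sphere (0:E) 1 × Set.Ioi (0:ℝ), G ((p.2 : ℝ) • (p.1 : E))
          ∂(μ.toSphere.prod (Measure.volumeIoiPow n)) := by
    rw [← hmp.integral_comp (homeomorphUnitSphereProd E).measurableEmbedding
        (fun p : sphere (0:E) 1 × Set.Ioi (0:ℝ) => G ((p.2 : ℝ) • (p.1 : E)))]
    exact integral_congr_ae (Eventually.of_forall fun x => by simp only [hsymm])
  have h2 : ∫ p : sphere (0:E) 1 × Set.Ioi (0:ℝ), G ((p.2 : ℝ) • (p.1 : E))
        ∂(μ.toSphere.prod (Measure.volumeIoiPow n))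
      = ∫ r : Set.Ioi (0:ℝ), (∫ ω : sphere (0:E) 1, G ((r : ℝ) • (ω:E)) ∂μ.toSphere)
          ∂(Measure.volumeIoiPow n) :=
    integral_prod_symm _ hint
  rw [← h0, h1, h2]
  simp only [Measure.volumeIoiPow, ENNReal.ofReal]
  rw [integral_withDensity_eq_integral_smul
      ((measurable_subtype_coe.pow_const _).real_toNNReal),
    integral_subtype_comap measurableSet_Ioi
      (fun a : ℝ => Real.toNNReal (a ^ n) • ∫ ω : sphere (0:E) 1, G (a • (ω:E)) ∂μ.toSphere)]
  refine setIntegral_congr_fun measurableSet_Ioi fun r hr => ?_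
  rw [NNReal.smul_def, Real.coe_toNNReal _ (pow_nonneg (le_of_lt hr) _), smul_eq_mul]

section Aux
variable {d : ℕ}

noncomputable def sphS (d : ℕ) (F : EuclideanSpace ℝ (Fin d) → ℝ) (t : ℝ) : ℝ :=
  ∫ ω : sphere (0 : EuclideanSpace ℝ (Fin d)) 1, F (t • (ω : EuclideanSpace ℝ (Fin d)))
    ∂(volume : Measure (EuclideanSpace ℝ (Fin d))).toSphere

noncomputable def phiF (d : ℕ) (F : EuclideanSpace ℝ (Fin d) → ℝ) (r : ℝ) : ℝ :=
  r ^ (d - 1) * sphS d F r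

variable (F : EuclideanSpace ℝ (Fin d) → ℝ)

lemma sphS_continuous (hFc : Continuous F) (hFsupp : HasCompactSupport F) :
    Continuous (sphS d F) := by
  obtain ⟨C, hC⟩ := hFsupp.exists_bound_of_continuous hFc
  refine continuous_of_dominated (fun t => ?_) (fun t => Eventually.of_forall fun ω => ?_)
    (integrable_const C) (Eventually.of_forall fun ω => ?_)
  · exact (hFc.comp (continuous_subtype_val.const_smul t)).aestronglyMeasurable
  · exact hC _
  · exact hFc.comp (continuous_id.smul continuous_const)

lemma phiF_continuous (hFc : Continuous F) (hFsupp : HasCompactSupport F) :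
    Continuous (phiF d F) :=
  (continuous_pow _).mul (sphS_continuous F hFc hFsupp)

lemma phiF_hasCompactSupport (hFsupp : HasCompactSupport F) :
    HasCompactSupport (phiF d F) := by
  obtain ⟨M, hM⟩ := hFsupp.isBounded.subset_closedBall (0 : EuclideanSpace ℝ (Fin d))
  have hS0 : ∀ t : ℝ, M < |t| → sphS d F t = 0 := by
    intro t ht
    have hz : ∀ ω : sphere (0 : EuclideanSpace ℝ (Fin d)) 1,
        F (t • (ω : EuclideanSpace ℝ (Fin d))) = 0 := by
      intro ω
      apply image_eq_zero_of_notMem_tsupport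
      intro hmem
      have h1 := hM hmem
      rw [mem_closedBall, dist_zero_right, norm_smul,
        mem_sphere_zero_iff_norm.1 ω.2, mul_one] at h1
      exact absurd h1 (not_le.2 ht)
    unfold sphS
    simp only [hz, integral_zero]
  apply HasCompactSupport.intro (isCompact_Icc (a := -(|M|+1)) (b := |M|+1))
  intro t ht
  have hMt : M < |t| := by
    simp only [Set.mem_Icc, not_and_or, not_le] at ht
    have h2 : |M| + 1 < |t| := by
      rcases ht with h | h
      · calc |M| + 1 < -t := by linarith
          _ ≤ |t| := neg_le_abs t
      · exact lt_of_lt_of_le h (le_abs_self t)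
    calc M ≤ |M| := le_abs_self M
      _ < |t| := by linarith
  show phiF d F t = 0
  unfold phiF
  rw [hS0 t hMt, mul_zero]

lemma key_polar (hd : 1 ≤ d) (hFc : Continuous F) (hFsupp : HasCompactSupport F)
    (W : ℝ → ℝ)
    (hW : Integrable (fun z : EuclideanSpace ℝ (Fin d) => W ‖z‖ * F z)) :
    (∫ z : EuclideanSpace ℝ (Fin d), W ‖z‖ * F z)
      = ∫ r in Set.Ioi (0:ℝ), W r * phiF d F r := by
  haveI : Nontrivial (EuclideanSpace ℝ (Fin d)) := by
    apply Module.nontrivial_of_finrank_pos (R := ℝ)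
    rw [finrank_euclideanSpace_fin]
    omega
  rw [polar_integral volume _ hW]
  refine setIntegral_congr_fun measurableSet_Ioi fun r hr => ?_
  have hrn : Module.finrank ℝ (EuclideanSpace ℝ (Fin d)) - 1 = d - 1 := by
    rw [finrank_euclideanSpace_fin]
  rw [hrn]
  have hω : (fun ω : sphere (0 : EuclideanSpace ℝ (Fin d)) 1 =>
        W ‖r • (ω : EuclideanSpace ℝ (Fin d))‖ * F (r • (ω : EuclideanSpace ℝ (Fin d))))
      = fun ω : sphere (0 : EuclideanSpace ℝ (Fin d)) 1 =>
        W r * F (r • (ω : EuclideanSpace ℝ (Fin d))) := by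
    funext ω
    rw [norm_smul, mem_sphere_zero_iff_norm.1 ω.2, mul_one, Real.norm_eq_abs,
      abs_of_pos hr]
  show r ^ (d-1) * (∫ ω : sphere (0 : EuclideanSpace ℝ (Fin d)) 1,
      W ‖r • (ω : EuclideanSpace ℝ (Fin d))‖ * F (r • (ω : EuclideanSpace ℝ (Fin d)))
      ∂(volume : Measure (EuclideanSpace ℝ (Fin d))).toSphere) = W r * phiF d F r
  rw [hω, integral_const_mul]
  unfold phiF sphS
  ring

end Aux
set_option maxHeartbeats 1000000 in
lemma thin_shell_avg (φ : ℝ → ℝ) (hφcont : Continuous φ) (hφint : Integrable φ)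
    (R : ℝ) (hR : 0 < R) :
    Tendsto (fun δ : ℝ => (2*δ)⁻¹ * ∫ r in Icc (R-δ) (R+δ), φ r)
      (𝓝[>] (0:ℝ)) (𝓝 (φ R)) := by
  rw [Metric.tendsto_nhdsWithin_nhds]
  intro η hη
  obtain ⟨δ₁, hδ₁, hball⟩ := Metric.continuousAt_iff.1 (hφcont.continuousAt (x := R))
    (η/2) (by positivity)
  refine ⟨min δ₁ R, by positivity, fun {δ} hδmem hdist => ?_⟩
  have hδ0 : 0 < δ := hδmem
  rw [Real.dist_eq, sub_zero, abs_of_pos hδ0] at hdist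
  have hδδ₁ : δ < δ₁ := lt_of_lt_of_le hdist (min_le_left _ _)
  have hδR : δ < R := lt_of_lt_of_le hdist (min_le_right _ _)
  have h2δ : (0:ℝ) < 2*δ := by linarith
  have hvol : (volume (Icc (R-δ) (R+δ))).toReal = 2*δ := by
    rw [Real.volume_Icc, ENNReal.toReal_ofReal (by linarith)]
    ring
  have hIccInt : IntegrableOn φ (Icc (R-δ) (R+δ)) := hφint.integrableOn
  have hconstInt : IntegrableOn (fun _ : ℝ => φ R) (Icc (R-δ) (R+δ)) :=
    integrableOn_const measure_Icc_lt_top.ne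
  have hconst : ∫ _ in Icc (R-δ) (R+δ), φ R = (2*δ) * φ R := by
    rw [setIntegral_const, smul_eq_mul, measureReal_def, hvol]
  have hkey : (2*δ)⁻¹ * (∫ r in Icc (R-δ) (R+δ), φ r) - φ R
      = (2*δ)⁻¹ * ∫ r in Icc (R-δ) (R+δ), (φ r - φ R) := by
    rw [integral_sub hIccInt hconstInt, hconst]
    field_simp
  have hbound : ‖∫ r in Icc (R-δ) (R+δ), (φ r - φ R)‖ ≤ (η/2) * (2*δ) := by
    have := norm_setIntegral_le_of_norm_le_const (μ := volume)
      (s := Icc (R-δ) (R+δ)) (C := η/2) (f := fun r => φ r - φ R)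
      measure_Icc_lt_top ?_
    · rw [measureReal_def, hvol] at this; exact this
    · intro r hr
      have h1 : |r - R| < δ₁ := by
        rw [abs_sub_lt_iff]
        constructor <;> [skip; skip] <;>
          (first | (have := hr.1; have := hr.2; linarith))
      have := hball (by rwa [Real.dist_eq])
      rw [Real.dist_eq] at this
      rw [Real.norm_eq_abs]
      linarith
  rw [Real.dist_eq, hkey, abs_mul, abs_of_pos (inv_pos.2 h2δ)]
  calc (2*δ)⁻¹ * |∫ r in Icc (R-δ) (R+δ), (φ r - φ R)|
      ≤ (2*δ)⁻¹ * ((η/2) * (2*δ)) := by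
        refine mul_le_mul_of_nonneg_left ?_ (inv_pos.2 h2δ).le
        rw [← Real.norm_eq_abs]; exact hbound
    _ = η/2 := by field_simp
    _ < η := by linarith
set_option maxHeartbeats 1000000 in
lemma kernel_limit (φ : ℝ → ℝ) (hφcont : Continuous φ) (hφsupp : HasCompactSupport φ)
    (R : ℝ) (hR : 0 < R) :
    Tendsto (fun ε : ℝ => ∫ r in Ioi (0:ℝ), ε / ((r^2 - R^2)^2 + ε^2) * φ r)
      (𝓝[>] (0:ℝ)) (𝓝 (π / (2*R) * φ R)) := by
  have hφint : Integrable φ := hφcont.integrable_of_hasCompactSupport hφsupp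
  obtain ⟨Cφ, hCφ⟩ := hφsupp.exists_bound_of_continuous hφcont
  have hCφ0 : 0 ≤ Cφ := le_trans (norm_nonneg _) (hCφ 0)
  have hDpos : ∀ (ε x : ℝ), 0 < ε → 0 < (x^2 - R^2)^2 + ε^2 := by
    intro ε x hε; positivity
  have hKcont : ∀ ε : ℝ, 0 < ε → Continuous (fun r : ℝ => ε / ((r^2 - R^2)^2 + ε^2)) := by
    intro ε hε
    exact continuous_const.div (by continuity) (fun r => (hDpos ε r hε).ne')
  have hKφint : ∀ ε : ℝ, 0 < ε →
      Integrable (fun r : ℝ => ε / ((r^2 - R^2)^2 + ε^2) * φ r) := by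
    intro ε hε
    exact ((hKcont ε hε).mul hφcont).integrable_of_hasCompactSupport hφsupp.mul_left
  set u1 : ℝ := (R/2)^2 - R^2 with hu1def
  set u2 : ℝ := (3*R/2)^2 - R^2 with hu2def
  have hu1 : u1 < 0 := by rw [hu1def]; nlinarith
  have hu2 : 0 < u2 := by rw [hu2def]; nlinarith
  have hu1R : -R^2 < u1 := by rw [hu1def]; nlinarith
  set ψt : ℝ → ℝ := fun u => φ (Real.sqrt (u + R^2)) / (2 * Real.sqrt (u + R^2)) with hψtdef
  set ψ : ℝ → ℝ := Set.indicator (Ioo u1 u2) ψt with hψdef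
  have himg : (fun r : ℝ => r^2 - R^2) '' (Ioo (R/2) (3*R/2)) = Ioo u1 u2 := by
    ext u
    simp only [Set.mem_image, Set.mem_Ioo]
    constructor
    · rintro ⟨r, ⟨h1, h2⟩, rfl⟩
      have h0 : (0:ℝ) < r := lt_trans (half_pos hR) h1
      constructor
      · rw [hu1def]; nlinarith
      · rw [hu2def]; nlinarith
    · rintro ⟨h1, h2⟩
      have hpos : 0 < u + R^2 := by
        rw [hu1def] at h1; nlinarith
      refine ⟨Real.sqrt (u + R^2), ⟨?_, ?_⟩, ?_⟩
      · rw [show (R/2) = Real.sqrt ((R/2)^2) from (Real.sqrt_sq (by positivity)).symm]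
        apply Real.sqrt_lt_sqrt (by positivity)
        rw [hu1def] at h1; nlinarith
      · rw [show (3*R/2) = Real.sqrt ((3*R/2)^2) from (Real.sqrt_sq (by positivity)).symm]
        apply Real.sqrt_lt_sqrt hpos.le
        rw [hu2def] at h2; nlinarith
      · rw [Real.sq_sqrt hpos.le]; ring
  have hsub : ∀ ε : ℝ, 0 < ε →
      (∫ r in Ioo (R/2) (3*R/2), ε / ((r^2 - R^2)^2 + ε^2) * φ r)
        = ∫ u : ℝ, ε * ψ u / (u^2 + ε^2) := by
    intro ε hε
    set g : ℝ → ℝ := fun u => ε * ψt u / (u^2 + ε^2) with hgdef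
    have hder : ∀ r ∈ Ioo (R/2) (3*R/2),
        HasDerivWithinAt (fun r : ℝ => r^2 - R^2) (2*r) (Ioo (R/2) (3*R/2)) r := by
      intro r _
      simpa using ((hasDerivAt_pow 2 r).sub_const (R^2)).hasDerivWithinAt
    have hinj : Set.InjOn (fun r : ℝ => r^2 - R^2) (Ioo (R/2) (3*R/2)) := by
      intro a ha b hb hab
      simp only at hab
      have ha0 : 0 < a := lt_trans (half_pos hR) ha.1
      have hb0 : 0 < b := lt_trans (half_pos hR) hb.1
      have h2 : a^2 = b^2 := by linarith
      calc a = Real.sqrt (a^2) := (Real.sqrt_sq ha0.le).symm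
        _ = Real.sqrt (b^2) := by rw [h2]
        _ = b := Real.sqrt_sq hb0.le
    have hchg := integral_image_eq_integral_abs_deriv_smul measurableSet_Ioo hder hinj g
    rw [himg] at hchg
    have hRHS : (∫ r in Ioo (R/2) (3*R/2), |2*r| • g (r^2 - R^2))
        = ∫ r in Ioo (R/2) (3*R/2), ε / ((r^2 - R^2)^2 + ε^2) * φ r := by
      refine setIntegral_congr_fun measurableSet_Ioo fun r hr => ?_
      have hr0 : 0 < r := lt_trans (half_pos hR) hr.1
      have hsq : Real.sqrt (r^2 - R^2 + R^2) = r := by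
        rw [sub_add_cancel, Real.sqrt_sq hr0.le]
      show |2*r| • (ε * ψt (r^2-R^2) / ((r^2-R^2)^2 + ε^2))
        = ε / ((r^2 - R^2)^2 + ε^2) * φ r
      simp only [hψtdef, hsq]
      rw [abs_of_pos (by positivity), smul_eq_mul]
      have hD := hDpos ε r hε
      field_simp
    rw [hRHS] at hchg
    rw [← hchg, ← integral_indicator measurableSet_Ioo]
    refine integral_congr_ae (Eventually.of_forall fun u => ?_)
    show Set.indicator (Ioo u1 u2) g u = ε * ψ u / (u^2 + ε^2)
    rw [hψdef]
    by_cases hu : u ∈ Ioo u1 u2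
    · rw [Set.indicator_of_mem hu, Set.indicator_of_mem hu]
    · rw [Set.indicator_of_notMem hu, Set.indicator_of_notMem hu, mul_zero, zero_div]
  have hψm : Measurable ψ := by
    rw [hψdef]
    refine Measurable.indicator ?_ measurableSet_Ioo
    rw [hψtdef]
    exact ((hφcont.comp
        (Real.continuous_sqrt.comp (continuous_id.add continuous_const))).measurable).div
      ((continuous_const.mul
        (Real.continuous_sqrt.comp (continuous_id.add continuous_const))).measurable)
  have hsqrt_lb : ∀ u : ℝ, u ∈ Ioo u1 u2 → R/2 < Real.sqrt (u + R^2) := by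
    intro u hu
    rw [show (R/2) = Real.sqrt ((R/2)^2) from (Real.sqrt_sq (by positivity)).symm]
    apply Real.sqrt_lt_sqrt (by positivity)
    have := hu.1
    rw [hu1def] at this
    nlinarith
  have hψb : ∀ u, |ψ u| ≤ Cφ / R := by
    intro u
    rw [hψdef]
    by_cases hu : u ∈ Ioo u1 u2
    · rw [Set.indicator_of_mem hu]
      have h1 := hsqrt_lb u hu
      have h2 : (0:ℝ) < 2 * Real.sqrt (u + R^2) := by linarith
      show |φ (Real.sqrt (u + R^2)) / (2 * Real.sqrt (u + R^2))| ≤ Cφ / R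
      rw [abs_div, abs_of_pos h2]
      apply div_le_div₀ hCφ0 ?_ hR (by linarith)
      rw [← Real.norm_eq_abs]; exact hCφ _
    · rw [Set.indicator_of_notMem hu]
      simp only [abs_zero]
      positivity
  have hψc : ContinuousAt ψ 0 := by
    have hopen : Ioo u1 u2 ∈ 𝓝 (0:ℝ) := isOpen_Ioo.mem_nhds (Set.mem_Ioo.2 ⟨hu1, hu2⟩)
    have heq : ψt =ᶠ[𝓝 (0:ℝ)] ψ := by
      filter_upwards [hopen] with u hu
      rw [hψdef, Set.indicator_of_mem hu]
    have hψtc : ContinuousAt ψt 0 := by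
      rw [hψtdef]
      apply ContinuousAt.div
      · exact hφcont.continuousAt.comp
          ((Real.continuous_sqrt.comp (continuous_id.add continuous_const)).continuousAt)
      · exact (continuous_const.mul
          (Real.continuous_sqrt.comp (continuous_id.add continuous_const))).continuousAt
      · show 2 * Real.sqrt ((0:ℝ) + R^2) ≠ 0
        rw [zero_add, Real.sqrt_sq hR.le]
        positivity
    exact (continuousAt_congr heq).1 hψtc
  have hψ0 : ψ 0 = φ R / (2 * R) := by
    rw [hψdef, Set.indicator_of_mem (Set.mem_Ioo.2 ⟨hu1, hu2⟩), hψtdef]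
    show φ (Real.sqrt (0 + R^2)) / (2 * Real.sqrt (0 + R^2)) = _
    rw [zero_add, Real.sqrt_sq hR.le]
  have hmeasfar : MeasurableSet (Ioi (0:ℝ) \ Ioo (R/2) (3*R/2)) :=
    measurableSet_Ioi.diff measurableSet_Ioo
  have hfarb : ∀ ε : ℝ, 0 < ε →
      ‖∫ r in Ioi (0:ℝ) \ Ioo (R/2) (3*R/2), ε / ((r^2 - R^2)^2 + ε^2) * φ r‖
        ≤ ε * ((16/(9*R^4)) * ∫ r : ℝ, |φ r|) := by
    intro ε hε
    have hptwise : ∀ r ∈ Ioi (0:ℝ) \ Ioo (R/2) (3*R/2),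
        ‖ε / ((r^2 - R^2)^2 + ε^2) * φ r‖ ≤ ε * (16/(9*R^4)) * |φ r| := by
      intro r hr
      have hr0 : (0:ℝ) < r := hr.1
      have hD : 9*R^4/16 ≤ (r^2 - R^2)^2 := by
        rcases not_and_or.1 hr.2 with h | h
        · push_neg at h
          have h1 : r^2 ≤ R^2/4 := by nlinarith
          nlinarith [sq_nonneg (R^2 - r^2 - 3*R^2/4)]
        · push_neg at h
          have h1 : 9*R^2/4 ≤ r^2 := by nlinarith
          nlinarith [sq_nonneg (r^2 - R^2 - 5*R^2/4)]
      have hKb : ε / ((r^2 - R^2)^2 + ε^2) ≤ ε * (16/(9*R^4)) := by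
        have h1 : ε / ((r^2 - R^2)^2 + ε^2) ≤ ε / (9*R^4/16) := by
          apply div_le_div_of_nonneg_left hε.le (by positivity)
          nlinarith [sq_nonneg ε]
        calc ε / ((r^2 - R^2)^2 + ε^2) ≤ ε / (9*R^4/16) := h1
          _ = ε * (16/(9*R^4)) := by
            rw [div_div_eq_mul_div, mul_div_assoc]
      rw [Real.norm_eq_abs, abs_mul, abs_of_pos (div_pos hε (hDpos ε r hε))]
      exact mul_le_mul_of_nonneg_right hKb (abs_nonneg _)
    have h1 : ‖∫ r in Ioi (0:ℝ) \ Ioo (R/2) (3*R/2), ε / ((r^2 - R^2)^2 + ε^2) * φ r‖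
        ≤ ∫ r in Ioi (0:ℝ) \ Ioo (R/2) (3*R/2), ε * (16/(9*R^4)) * |φ r| := by
      apply norm_integral_le_of_norm_le ((hφint.abs.const_mul _).integrableOn)
      exact (ae_restrict_iff' hmeasfar).2 (Eventually.of_forall hptwise)
    have h2 : (∫ r in Ioi (0:ℝ) \ Ioo (R/2) (3*R/2), ε * (16/(9*R^4)) * |φ r|)
        = ε * (16/(9*R^4)) * ∫ r in Ioi (0:ℝ) \ Ioo (R/2) (3*R/2), |φ r| :=
      integral_const_mul _ _
    have h3 : (∫ r in Ioi (0:ℝ) \ Ioo (R/2) (3*R/2), |φ r|) ≤ ∫ r : ℝ, |φ r| :=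
      setIntegral_le_integral hφint.abs (Eventually.of_forall fun r => abs_nonneg _)
    calc ‖∫ r in Ioi (0:ℝ) \ Ioo (R/2) (3*R/2), ε / ((r^2 - R^2)^2 + ε^2) * φ r‖
        ≤ ∫ r in Ioi (0:ℝ) \ Ioo (R/2) (3*R/2), ε * (16/(9*R^4)) * |φ r| := h1
      _ = ε * (16/(9*R^4)) * ∫ r in Ioi (0:ℝ) \ Ioo (R/2) (3*R/2), |φ r| := h2
      _ ≤ ε * (16/(9*R^4)) * ∫ r : ℝ, |φ r| := by
          apply mul_le_mul_of_nonneg_left h3 (by positivity)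
      _ = ε * ((16/(9*R^4)) * ∫ r : ℝ, |φ r|) := by ring
  have hfar : Tendsto (fun ε : ℝ => ∫ r in Ioi (0:ℝ) \ Ioo (R/2) (3*R/2),
      ε / ((r^2 - R^2)^2 + ε^2) * φ r) (𝓝[>] (0:ℝ)) (𝓝 0) := by
    apply squeeze_zero_norm'
    · filter_upwards [self_mem_nhdsWithin] with ε hε
      exact hfarb ε hε
    · have h := ((tendsto_id.mono_right nhdsWithin_le_nhds).mul_const
        ((16/(9*R^4)) * ∫ r : ℝ, |φ r|) : Tendsto _ (𝓝[>] (0:ℝ)) _)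
      simpa using h
  have hnear : Tendsto (fun ε : ℝ => ∫ r in Ioo (R/2) (3*R/2),
      ε / ((r^2 - R^2)^2 + ε^2) * φ r) (𝓝[>] (0:ℝ)) (𝓝 (π * (φ R / (2*R)))) := by
    have hp := poisson_limit ψ hψm (Cφ/R) hψb hψc
    rw [hψ0] at hp
    refine hp.congr' ?_
    filter_upwards [self_mem_nhdsWithin] with ε hε
    exact (hsub ε hε).symm
  have hsplit : ∀ ε : ℝ, 0 < ε →
      (∫ r in Ioi (0:ℝ), ε / ((r^2 - R^2)^2 + ε^2) * φ r)
        = (∫ r in Ioo (R/2) (3*R/2), ε / ((r^2 - R^2)^2 + ε^2) * φ r)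
          + ∫ r in Ioi (0:ℝ) \ Ioo (R/2) (3*R/2), ε / ((r^2 - R^2)^2 + ε^2) * φ r := by
    intro ε hε
    have h := integral_inter_add_diff (μ := volume) (s := Ioi (0:ℝ))
      (t := Ioo (R/2) (3*R/2)) measurableSet_Ioo ((hKφint ε hε).integrableOn)
    have hss : Ioo (R/2) (3*R/2) ⊆ Ioi (0:ℝ) := fun x hx => lt_trans (half_pos hR) hx.1
    rw [Set.inter_eq_self_of_subset_right hss] at h
    exact h.symm
  have h := hnear.add hfar
  rw [add_zero] at h
  have heqlim : π * (φ R / (2*R)) = π / (2*R) * φ R := by ring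
  rw [heqlim] at h
  refine h.congr' ?_
  filter_upwards [self_mem_nhdsWithin] with ε hε
  exact (hsplit ε hε).symm

/-- Radial concentration behind Fermi's golden rule: the kernels
`ε / ((‖y+k‖² - ‖k‖²)² + ε²)` concentrate on the sphere `∂B_{‖k‖}(-k)` with weight `π/(2‖k‖)`;
`L` is the limit of normalized thin-shell averages of `f`. -/
theorem stmt_5 (d : ℕ) (hd : 1 ≤ d) (k : EuclideanSpace ℝ (Fin d)) (hk : k ≠ 0)
    (f : EuclideanSpace ℝ (Fin d) → ℝ) (hf : Continuous f) (hsupp : HasCompactSupport f) :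
    ∃ L : ℝ,
      Tendsto (fun δ : ℝ =>
          (2 * δ)⁻¹ *
            ∫ y in {y : EuclideanSpace ℝ (Fin d) | ‖k‖ - δ ≤ ‖y + k‖ ∧ ‖y + k‖ ≤ ‖k‖ + δ}, f y)
        (𝓝[>] (0 : ℝ)) (𝓝 L) ∧
      Tendsto (fun ε : ℝ =>
          ∫ y : EuclideanSpace ℝ (Fin d), ε * f y / ((‖y + k‖ ^ 2 - ‖k‖ ^ 2) ^ 2 + ε ^ 2))
        (𝓝[>] (0 : ℝ)) (𝓝 (π / (2 * ‖k‖) * L)) := by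
  classical
  have hR : (0:ℝ) < ‖k‖ := norm_pos_iff.mpr hk
  set R := ‖k‖ with hRdef
  set F : EuclideanSpace ℝ (Fin d) → ℝ := fun z => f (z - k) with hFdef
  have hFc : Continuous F := hf.comp (continuous_id.sub continuous_const)
  have hFsupp : HasCompactSupport F := by
    have : F = f ∘ (Homeomorph.subRight k) := rfl
    rw [this]
    exact hsupp.comp_homeomorph _
  have hFint : Integrable F := hFc.integrable_of_hasCompactSupport hFsupp
  set φ : ℝ → ℝ := phiF d F with hφdef
  have hφcont : Continuous φ := phiF_continuous F hFc hFsupp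
  have hφsupp : HasCompactSupport φ := phiF_hasCompactSupport F hFsupp
  have hφint : Integrable φ := hφcont.integrable_of_hasCompactSupport hφsupp
  obtain ⟨Cφ, hCφ⟩ := hφsupp.exists_bound_of_continuous hφcont
  have hCφ0 : 0 ≤ Cφ := le_trans (norm_nonneg _) (hCφ 0)
  refine ⟨φ R, ?_, ?_⟩
  · -- B side
    have hshell : ∀ δ : ℝ, 0 < δ → δ < R →
        (∫ y in {y : EuclideanSpace ℝ (Fin d) | R - δ ≤ ‖y + k‖ ∧ ‖y + k‖ ≤ R + δ}, f y)
          = ∫ r in Icc (R - δ) (R + δ), φ r := by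
      intro δ hδ hδR
      set Sy := {y : EuclideanSpace ℝ (Fin d) | R - δ ≤ ‖y + k‖ ∧ ‖y + k‖ ≤ R + δ} with hSy
      have hmem : ∀ y : EuclideanSpace ℝ (Fin d),
          y ∈ Sy ↔ ‖y + k‖ ∈ Icc (R - δ) (R + δ) := by
        intro y; simp [hSy, Set.mem_Icc]
      have hms : MeasurableSet Sy := by
        have : Sy = (fun y : EuclideanSpace ℝ (Fin d) => ‖y + k‖) ⁻¹' (Icc (R-δ) (R+δ)) := by
          ext y; simp [hSy, Set.mem_Icc]
        rw [this]
        exact (continuous_norm.comp (continuous_id.add continuous_const)).measurable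
          measurableSet_Icc
      have hWint : Integrable (fun z : EuclideanSpace ℝ (Fin d) =>
          Set.indicator (Icc (R-δ) (R+δ)) (fun _ => (1:ℝ)) ‖z‖ * F z) := by
        have heq : (fun z : EuclideanSpace ℝ (Fin d) =>
            Set.indicator (Icc (R-δ) (R+δ)) (fun _ => (1:ℝ)) ‖z‖ * F z)
            = Set.indicator {z : EuclideanSpace ℝ (Fin d) | ‖z‖ ∈ Icc (R-δ) (R+δ)} F := by
          funext z
          by_cases hz : ‖z‖ ∈ Icc (R-δ) (R+δ)
          · rw [Set.indicator_of_mem hz, Set.indicator_of_mem (by exact hz), one_mul]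
          · rw [Set.indicator_of_notMem hz, Set.indicator_of_notMem (by exact hz), zero_mul]
        rw [heq]
        refine hFint.indicator ?_
        exact (continuous_norm (E := EuclideanSpace ℝ (Fin d))).measurable measurableSet_Icc
      calc (∫ y in Sy, f y)
          = ∫ y, Set.indicator Sy f y := (integral_indicator hms).symm
        _ = ∫ y, Set.indicator (Icc (R-δ) (R+δ)) (fun _ => (1:ℝ)) ‖y + k‖ * F (y + k) := by
            refine integral_congr_ae (Eventually.of_forall fun y => ?_)
            show Set.indicator Sy f y
              = Set.indicator (Icc (R-δ) (R+δ)) (fun _ => (1:ℝ)) ‖y + k‖ * F (y + k)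
            by_cases hy : ‖y + k‖ ∈ Icc (R-δ) (R+δ)
            · rw [Set.indicator_of_mem ((hmem y).2 hy), Set.indicator_of_mem hy, one_mul,
                hFdef]
              simp
            · rw [Set.indicator_of_notMem (fun hmem' => hy ((hmem y).1 hmem')),
                Set.indicator_of_notMem hy, zero_mul]
        _ = ∫ z, Set.indicator (Icc (R-δ) (R+δ)) (fun _ => (1:ℝ)) ‖z‖ * F z :=
            integral_add_right_eq_self (fun z : EuclideanSpace ℝ (Fin d) =>
              Set.indicator (Icc (R-δ) (R+δ)) (fun _ => (1:ℝ)) ‖z‖ * F z) k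
        _ = ∫ r in Ioi (0:ℝ), Set.indicator (Icc (R-δ) (R+δ)) (fun _ => (1:ℝ)) r * φ r :=
            key_polar F hd hFc hFsupp _ hWint
        _ = ∫ r in Ioi (0:ℝ), Set.indicator (Icc (R-δ) (R+δ)) φ r := by
            refine setIntegral_congr_fun measurableSet_Ioi fun r _ => ?_
            by_cases hr : r ∈ Icc (R-δ) (R+δ)
            · rw [Set.indicator_of_mem hr, Set.indicator_of_mem hr, one_mul]
            · rw [Set.indicator_of_notMem hr, Set.indicator_of_notMem hr, zero_mul]
        _ = ∫ r in Ioi (0:ℝ) ∩ Icc (R-δ) (R+δ), φ r := setIntegral_indicator measurableSet_Icc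
        _ = ∫ r in Icc (R-δ) (R+δ), φ r := by
            rw [Set.inter_eq_self_of_subset_right]
            intro r hr
            have := hr.1
            simp only [Set.mem_Ioi]
            linarith
    refine (thin_shell_avg φ hφcont hφint R hR).congr' ?_
    filter_upwards [Ioo_mem_nhdsGT_of_mem (Set.left_mem_Ico.2 hR)] with δ hδ
    rw [hshell δ hδ.1 hδ.2]
  · have hA_eq : ∀ ε : ℝ, 0 < ε →
        (∫ y : EuclideanSpace ℝ (Fin d), ε * f y / ((‖y + k‖ ^ 2 - R ^ 2) ^ 2 + ε ^ 2))
          = ∫ r in Ioi (0:ℝ), ε / ((r^2 - R^2)^2 + ε^2) * φ r := by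
      intro ε hε
      have hDpos : ∀ x : ℝ, 0 < (x^2 - R^2)^2 + ε^2 := by
        intro x; positivity
      have hKcont : Continuous (fun r : ℝ => ε / ((r^2 - R^2)^2 + ε^2)) :=
        continuous_const.div (by continuity) (fun r => (hDpos r).ne')
      have hWint : Integrable (fun z : EuclideanSpace ℝ (Fin d) =>
          ε / ((‖z‖^2 - R^2)^2 + ε^2) * F z) := by
        refine Continuous.integrable_of_hasCompactSupport ?_ hFsupp.mul_left
        exact (hKcont.comp continuous_norm).mul hFc
      calc (∫ y : EuclideanSpace ℝ (Fin d), ε * f y / ((‖y + k‖ ^ 2 - R ^ 2) ^ 2 + ε ^ 2))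
          = ∫ y : EuclideanSpace ℝ (Fin d),
              (fun z => ε / ((‖z‖^2 - R^2)^2 + ε^2) * F z) (y + k) := by
            refine integral_congr_ae (Eventually.of_forall fun y => ?_)
            show ε * f y / ((‖y + k‖ ^ 2 - R ^ 2) ^ 2 + ε ^ 2)
              = ε / ((‖y + k‖^2 - R^2)^2 + ε^2) * F (y + k)
            simp only [hFdef, add_sub_cancel_right]
            rw [div_mul_eq_mul_div]
        _ = ∫ z : EuclideanSpace ℝ (Fin d), ε / ((‖z‖^2 - R^2)^2 + ε^2) * F z :=
            integral_add_right_eq_self (fun z : EuclideanSpace ℝ (Fin d) =>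
              ε / ((‖z‖^2 - R^2)^2 + ε^2) * F z) k
        _ = _ := key_polar F hd hFc hFsupp
              (fun r => ε / ((r^2 - R^2)^2 + ε^2)) hWint
    refine (kernel_limit φ hφcont hφsupp R hR).congr' ?_
    filter_upwards [self_mem_nhdsWithin] with ε hε
    exact (hA_eq ε hε).symm
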